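/- Let F: X ⇉ Y be a set-valued mapping between locally convex topological vector spaces whose graph is convex. Suppose that gph(F) is quasi-regular and that int(F(x)) ≠ ∅ for every x ∈ dom(F). Then qri(gph F) = {(x, y) ∈ X × Y | x ∈ qri(dom F) and y ∈ int(F(x))}, and moreover dom(F) is quasi-regular. -/

import Mathlib

open Set Pointwise Filter Topology

/-- The cone generated by a set `A`: `{t • a | t ≥ 0, a ∈ A}`. -/
def coneGen {X : Type*} [AddCommGroup X] [Module ℝ X] (A : Set X) : Set X :=
  {y | ∃ t : ℝ, 0 ≤ t ∧ ∃ a ∈ A, y = t • a}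

/-- A set is a linear subspace if it is the carrier of a submodule. -/
def IsLinSubspace {X : Type*} [AddCommGroup X] [Module ℝ X] (s : Set X) : Prop :=
  ∃ L : Submodule ℝ X, (L : Set X) = s

/-- Intrinsic relative interior. -/
def iri {X : Type*} [AddCommGroup X] [Module ℝ X] (Ω : Set X) : Set X :=
  {x ∈ Ω | IsLinSubspace (coneGen ((fun y => y - x) '' Ω))}

/-- Quasi-relative interior. -/
def qri {X : Type*} [AddCommGroup X] [Module ℝ X] [TopologicalSpace X] (Ω : Set X) : Set X :=
  {x ∈ Ω | IsLinSubspace (closure (coneGen ((fun y => y - x) '' Ω)))}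

/-- Relative interior in a topological vector space. -/
def ri {X : Type*} [AddCommGroup X] [Module ℝ X] [TopologicalSpace X] (Ω : Set X) : Set X :=
  {x ∈ Ω | ∃ V ∈ nhds x, V ∩ closure ((affineSpan ℝ Ω : Set X)) ⊆ Ω}

/-- Normal cone (functional-analytic version), a subset of the topological dual. -/
def normalCone {X : Type*} [AddCommGroup X] [Module ℝ X] [TopologicalSpace X]
    (Ω : Set X) (xb : X) : Set (X →L[ℝ] ℝ) :=
  {f | ∀ x ∈ Ω, f (x - xb) ≤ 0}

/-- The graph of a set-valued mapping. -/
def gph {X Y : Type*} (F : X → Set Y) : Set (X × Y) := {p | p.2 ∈ F p.1}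

/-- The domain of a set-valued mapping. -/
def domF {X Y : Type*} (F : X → Set Y) : Set X := {x | (F x).Nonempty}

/-- A convex set is quasi-regular if its quasi-relative interior coincides with
its intrinsic relative interior. -/
def QuasiRegular {X : Type*} [AddCommGroup X] [Module ℝ X] [TopologicalSpace X]
    (Ω : Set X) : Prop :=
  qri Ω = iri Ω

section AuxLemmas

variable {X Y : Type*} [AddCommGroup X] [Module ℝ X] [AddCommGroup Y] [Module ℝ Y]

/-- `iri ⊆ qri` in a topological vector space. -/
lemma aux_iri_subset_qri [TopologicalSpace X] [IsTopologicalAddGroup X] [ContinuousSMul ℝ X]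
    (Ω : Set X) : iri Ω ⊆ qri Ω := by
  rintro x ⟨hx, L, hL⟩
  refine ⟨hx, L.topologicalClosure, ?_⟩
  rw [Submodule.topologicalClosure_coe, hL]

/-- image of `coneGen` under a linear map. -/
lemma aux_image_coneGen (f : X →ₗ[ℝ] Y) (A : Set X) :
    f '' coneGen A = coneGen (f '' A) := by
  ext y
  constructor
  · rintro ⟨z, ⟨t, ht, a, ha, rfl⟩, rfl⟩
    exact ⟨t, ht, f a, ⟨a, ha, rfl⟩, (f.map_smul t a)⟩
  · rintro ⟨t, ht, b, ⟨a, ha, rfl⟩, rfl⟩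
    exact ⟨t • a, ⟨t, ht, a, ha, rfl⟩, f.map_smul t a⟩

lemma aux_isLinSubspace_image (f : X →ₗ[ℝ] Y) {s : Set X} (h : IsLinSubspace s) :
    IsLinSubspace (f '' s) := by
  obtain ⟨L, hL⟩ := h
  exact ⟨L.map f, by rw [Submodule.map_coe, hL]⟩

/-- projection of the shifted graph. -/
lemma aux_fst_image (F : X → Set Y) (x : X) (y : Y) :
    Prod.fst '' ((fun q => q - (x, y)) '' gph F) = (fun x' => x' - x) '' domF F := by
  ext u
  constructor
  · rintro ⟨q, ⟨⟨x', y'⟩, hq, rfl⟩, rfl⟩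
    exact ⟨x', ⟨y', hq⟩, rfl⟩
  · rintro ⟨x', ⟨y', hy'⟩, rfl⟩
    exact ⟨(x', y') - (x, y), ⟨(x', y'), hy', rfl⟩, rfl⟩

lemma aux_fst_cone (F : X → Set Y) (x : X) (y : Y) :
    (LinearMap.fst ℝ X Y) '' coneGen ((fun q => q - (x, y)) '' gph F)
      = coneGen ((fun x' => x' - x) '' domF F) := by
  rw [aux_image_coneGen, ← aux_fst_image F x y]; rfl

/-- slices of a convex graph are convex. -/
lemma aux_convex_slice {F : X → Set Y} (hconv : Convex ℝ (gph F)) (x : X) :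
    Convex ℝ (F x) := by
  intro y₁ h₁ y₂ h₂ a b ha hb hab
  have := hconv (x := (x, y₁)) (y := (x, y₂)) h₁ h₂ ha hb hab
  have hx : a • x + b • x = x := by
    rw [← add_smul, hab, one_smul]
  simpa [gph, Prod.smul_mk, Prod.mk_add_mk, hx] using this

variable [TopologicalSpace X] [IsTopologicalAddGroup X] [ContinuousSMul ℝ X]
variable [TopologicalSpace Y] [IsTopologicalAddGroup Y] [ContinuousSMul ℝ Y]

/-- key membership: if `y ∈ interior (F x)` and `d ∈ dom F`, then `(d - x, v)` lies in the
cone generated by the shifted graph, for every `v`. -/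
lemma aux_mem_cone {F : X → Set Y} (hconv : Convex ℝ (gph F)) {x : X} {y : Y}
    (hy : y ∈ interior (F x)) {d : X} (hd : d ∈ domF F) (v : Y) :
    (d - x, v) ∈ coneGen ((fun q => q - (x, y)) '' gph F) := by
  obtain ⟨w, hw⟩ := hd
  set c : Y := v - (w - y) with hc
  -- z λ = (λ/(1-λ)) • c tends to 0 as λ → 0⁺
  have htend : Tendsto (fun l : ℝ => y + (l / (1 - l)) • c) (𝓝[>] 0) (𝓝 y) := by
    have h1 : Tendsto (fun l : ℝ => l / (1 - l)) (𝓝 0) (𝓝 0) := by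
      have ha : Tendsto (fun l : ℝ => 1 - l) (𝓝 (0:ℝ)) (𝓝 (1 - 0)) :=
        tendsto_const_nhds.sub tendsto_id
      have := Tendsto.div (f := fun l : ℝ => l) tendsto_id ha (by norm_num)
      simpa [Pi.div_def] using this
    have h2 : Tendsto (fun l : ℝ => y + (l / (1 - l)) • c) (𝓝 0) (𝓝 y) := by
      have := (tendsto_const_nhds (x := y)).add (h1.smul_const c)
      simpa using this
    exact h2.mono_left nhdsWithin_le_nhds
  have hmem : ∀ᶠ l : ℝ in 𝓝[>] 0, y + (l / (1 - l)) • c ∈ F x := by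
    filter_upwards [htend (interior_mem_nhds.mpr (mem_interior_iff_mem_nhds.mp hy))] with l hl
    exact interior_subset hl
  have hIoo : Ioo (0:ℝ) (1/2) ∈ 𝓝[>] (0:ℝ) :=
    Ioo_mem_nhdsGT_of_mem ⟨le_refl _, by norm_num⟩
  obtain ⟨l, hl, hl0, hl2⟩ := (hmem.and (eventually_of_mem hIoo fun _ h => h)).exists
  have hl1 : l < 1 := by linarith [hl2]
  have hlne : (1:ℝ) - l ≠ 0 := by linarith
  have hlpos : (0:ℝ) < l := hl0
  set z : Y := (l / (1 - l)) • c with hz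
  have hmemG : ((x, y + z) : X × Y) ∈ gph F := hl
  have hdG : ((d, w) : X × Y) ∈ gph F := hw
  have hq : (1 - l) • ((x, y + z) : X × Y) + l • ((d, w) : X × Y) ∈ gph F :=
    hconv hmemG hdG (by linarith) (le_of_lt hlpos) (by ring)
  refine ⟨l⁻¹, by positivity, _, ⟨_, hq, rfl⟩, ?_⟩
  have hzc : (1 - l) • z = l • c := by
    rw [hz, smul_smul]
    congr 1
    field_simp
  have key : ((1 - l) • ((x, y + z) : X × Y) + l • ((d, w) : X × Y)) - (x, y)
      = l • ((d - x, v) : X × Y) := by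
    apply Prod.ext
    · simp only [Prod.smul_mk, Prod.mk_add_mk, Prod.mk_sub_mk, Prod.fst_sub, Prod.smul_fst,
        Prod.fst_add]
      module
    · simp only [Prod.smul_mk, Prod.mk_add_mk, Prod.mk_sub_mk, Prod.snd_sub, Prod.smul_snd,
        Prod.snd_add]
      rw [smul_add, hzc, hc]
      module
  show (d - x, v) = l⁻¹ • (((1 - l) • ((x, y + z) : X × Y) + l • ((d, w) : X × Y)) - (x, y))
  rw [key, smul_smul, inv_mul_cancel₀ (ne_of_gt hlpos), one_smul]

end AuxLemmas

section Aux2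
variable {X Y : Type*} [AddCommGroup X] [Module ℝ X] [AddCommGroup Y] [Module ℝ Y]

lemma aux_smul_mem_coneGen {A : Set X} {p : X} (hp : p ∈ coneGen A) {t : ℝ} (ht : 0 ≤ t) :
    t • p ∈ coneGen A := by
  obtain ⟨s, hs, a, ha, rfl⟩ := hp
  exact ⟨t * s, mul_nonneg ht hs, a, ha, (smul_smul t s a)⟩

variable [TopologicalSpace X] [IsTopologicalAddGroup X] [ContinuousSMul ℝ X]
variable [TopologicalSpace Y] [IsTopologicalAddGroup Y] [ContinuousSMul ℝ Y]

/-- structure of the cone of the shifted graph at an "interior" point. -/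
lemma aux_cone_eq_prod {F : X → Set Y} (hconv : Convex ℝ (gph F)) {x : X} {y : Y}
    (hy : y ∈ interior (F x)) :
    coneGen ((fun q => q - ((x, y) : X × Y)) '' gph F)
      = coneGen ((fun x' => x' - x) '' domF F) ×ˢ (univ : Set Y) := by
  apply Subset.antisymm
  · rintro p ⟨t, ht, a, ⟨⟨x', y'⟩, hq, rfl⟩, rfl⟩
    refine ⟨⟨t, ht, x' - x, ⟨x', ⟨y', hq⟩, rfl⟩, ?_⟩, trivial⟩
    simp [Prod.smul_fst]
  · rintro ⟨u, v⟩ ⟨⟨t, ht, u', ⟨d, hd, rfl⟩, hu⟩, -⟩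
    simp only at hu
    rcases eq_or_lt_of_le ht with h0 | hpos
    · have hxD : x ∈ domF F := ⟨y, interior_subset hy⟩
      have := aux_mem_cone hconv hy hxD v
      have hu0 : u = 0 := by rw [hu, ← h0, zero_smul]
      simpa [hu0, sub_self] using this
    · have hmem := aux_mem_cone hconv hy hd (t⁻¹ • v)
      have := aux_smul_mem_coneGen hmem ht
      have heq : t • ((d - x, t⁻¹ • v) : X × Y) = (u, v) := by
        rw [hu]
        apply Prod.ext
        · simp
        · simp [smul_smul, mul_inv_cancel₀ (ne_of_gt hpos)]
      rwa [heq] at this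

/-- if `(x, y) ∈ iri (gph F)` and `interior (F x)` is nonempty, then `y ∈ interior (F x)`. -/
lemma aux_int_of_iri {F : X → Set Y} (hconv : Convex ℝ (gph F)) {x : X} {y : Y}
    (hne : (interior (F x)).Nonempty) (h : (x, y) ∈ iri (gph F)) :
    y ∈ interior (F x) := by
  obtain ⟨hxy, L, hL⟩ := h
  obtain ⟨y₀, hy₀⟩ := hne
  have h1 : ((x, y₀) : X × Y) - (x, y) ∈ coneGen ((fun q => q - ((x, y) : X × Y)) '' gph F) :=
    ⟨1, zero_le_one, _, ⟨(x, y₀), show ((x, y₀) : X × Y) ∈ gph F from (interior_subset hy₀ : y₀ ∈ F x), rfl⟩, (one_smul _ _).symm⟩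
  rw [← hL] at h1
  have h2 : -(((x, y₀) : X × Y) - (x, y)) ∈ (L : Set (X × Y)) := neg_mem h1
  rw [hL] at h2
  obtain ⟨t, ht, a, ⟨⟨x', y'⟩, hG, rfl⟩, heq⟩ := h2
  have hfst : (0 : X) = t • (x' - x) := by
    have := congrArg Prod.fst heq
    simpa using this
  have hsnd : y - y₀ = t • (y' - y) := by
    have := congrArg Prod.snd heq
    simpa [neg_sub] using this
  rcases eq_or_lt_of_le ht with h0 | hpos
  · have : y - y₀ = 0 := by rw [hsnd, ← h0, zero_smul]
    have hyy : y = y₀ := by rwa [sub_eq_zero] at this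
    rwa [hyy]
  · have hx' : x' = x := by
      have h3 : t • (x' - x) = 0 := hfst.symm
      have h4 : x' - x = 0 := by
        rcases smul_eq_zero.mp h3 with h | h
        · exact absurd h (ne_of_gt hpos)
        · exact h
      rwa [sub_eq_zero] at h4
    have hy'Fx : y' ∈ F x := by rw [← hx']; exact hG
    have ht1 : (0 : ℝ) < 1 + t := by linarith
    rw [smul_sub, sub_eq_sub_iff_add_eq_add] at hsnd
    -- hsnd : y + t • y = t • y' + y₀
    have h2' : y₀ + t • y' = (1 + t) • y := by
      rw [add_smul, one_smul, hsnd]; abel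
    have h5 : (1 + t)⁻¹ • y₀ + (t * (1 + t)⁻¹) • y' = y := by
      rw [mul_comm, ← smul_smul, ← smul_add, h2', smul_smul,
        inv_mul_cancel₀ (ne_of_gt ht1), one_smul]
    have := Convex.combo_interior_self_mem_interior (aux_convex_slice hconv x) hy₀ hy'Fx
      (inv_pos.mpr ht1) (mul_nonneg (le_of_lt hpos) (le_of_lt (inv_pos.mpr ht1)))
      (by field_simp)
    rwa [h5] at this

end Aux2

/-- if the graph of a convex set-valued mapping `F` between LCTV
spaces is quasi-regular and `int (F x) ≠ ∅` for every `x ∈ dom F`, then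
`qri (gph F) = {(x, y) | x ∈ qri (dom F), y ∈ int (F x)}` and `dom F` is quasi-regular. -/
theorem qri_gph_eq_of_quasiRegular {X Y : Type*} [AddCommGroup X] [Module ℝ X]
    [TopologicalSpace X] [IsTopologicalAddGroup X] [ContinuousSMul ℝ X]
    [LocallyConvexSpace ℝ X]
    [AddCommGroup Y] [Module ℝ Y]
    [TopologicalSpace Y] [IsTopologicalAddGroup Y] [ContinuousSMul ℝ Y]
    [LocallyConvexSpace ℝ Y]
    (F : X → Set Y) (hconv : Convex ℝ (gph F))
    (hreg : QuasiRegular (gph F))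
    (hint : ∀ x ∈ domF F, (interior (F x)).Nonempty) :
    qri (gph F) = {p : X × Y | p.1 ∈ qri (domF F) ∧ p.2 ∈ interior (F p.1)} ∧
      QuasiRegular (domF F) := by
  -- forward implication: x ∈ qri (dom F) and y ∈ int (F x) imply (x, y) ∈ qri (gph F)
  have forward : ∀ x y, x ∈ qri (domF F) → y ∈ interior (F x) → ((x, y) : X × Y) ∈ qri (gph F) := by
    intro x y hx hy
    obtain ⟨hxD, N, hN⟩ := hx
    refine ⟨show y ∈ F x from interior_subset hy, N.prod ⊤, ?_⟩
    rw [show coneGen ((fun q => q - ((x, y) : X × Y)) '' gph F)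
        = coneGen ((fun x' => x' - x) '' domF F) ×ˢ (univ : Set Y) from aux_cone_eq_prod hconv hy,
      closure_prod_eq, closure_univ, ← hN]
    rfl
  -- backward: (x, y) ∈ iri (gph F) implies x ∈ iri (dom F)
  have backward1 : ∀ x y, ((x, y) : X × Y) ∈ iri (gph F) → x ∈ iri (domF F) := by
    rintro x y ⟨hxy, hsub⟩
    refine ⟨⟨y, hxy⟩, ?_⟩
    rw [← aux_fst_cone F x y]
    exact aux_isLinSubspace_image _ hsub
  constructor
  · ext ⟨x, y⟩
    simp only [mem_setOf_eq]
    constructor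
    · intro h
      rw [hreg] at h
      have hxD : x ∈ domF F := ⟨y, h.1⟩
      exact ⟨aux_iri_subset_qri _ (backward1 x y h), aux_int_of_iri hconv (hint x hxD) h⟩
    · rintro ⟨hx, hy⟩
      exact forward x y hx hy
  · apply Subset.antisymm
    · intro x hx
      obtain ⟨y, hy⟩ := hint x hx.1
      have h1 := forward x y hx hy
      rw [hreg] at h1
      exact backward1 x y h1
    · exact aux_iri_subset_qri _
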